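/- Let Σ be a finite alphabet of size q, let m∈ℕ, and let X ⊆ Σ^m. Then |W(X)| = |X|, where W(X) ⊆ {1,…,q}^m is the winning set of X. -/

import Mathlib

/-! ### Basic objects: Boolean functions, matrices, compositions -/

/-- Boolean functions on `n`-bit strings. -/
abbrev BFunc (n : ℕ) : Type := (Fin n → Bool) → Bool

/-- Boolean `m × n` matrices, viewed as tuples of rows. -/
abbrev BMat (m n : ℕ) : Type := Fin m → Fin n → Bool

/-- The column vector obtained by applying `g` to every row of `X`. -/
def gRows {m n : ℕ} (g : BFunc n) (X : BMat m n) : Fin m → Bool := fun i => g (X i)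

/-- The composition `f ⋄ g` applied to a matrix `X`. -/
def compFG {m n : ℕ} (f : BFunc m) (g : BFunc n) (X : BMat m n) : Bool := f (gRows g X)

/-- A Boolean function is non-constant. -/
def NonConst {k : ℕ} (f : BFunc k) : Prop := (∃ x, f x = true) ∧ (∃ x, f x = false)

/-- A Boolean function on `n` bits is balanced if it has exactly `2^(n-1)` ones. -/
def IsBalanced {n : ℕ} (g : BFunc n) : Prop := {x | g x = true}.ncard = 2 ^ (n - 1)

/-- The set `V₀` of balanced functions. -/
def BalancedFuncs (n : ℕ) : Set (BFunc n) := {g | IsBalanced g}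

/-- The set of matrices `X` with `g(X) = a`. -/
def ginv {m n : ℕ} (g : BFunc n) (a : Fin m → Bool) : Set (BMat m n) := {X | gRows g X = a}

/-! ### De Morgan formulas and formula complexity -/

/-- De Morgan formulas over `m` variables: leaves are literals, gates are AND/OR. -/
inductive DMF (m : ℕ) : Type where
  | lit (i : Fin m) (pos : Bool)
  | and (l r : DMF m)
  | or (l r : DMF m)

namespace DMF

/-- Size of a formula: its number of leaves. -/
def size {m : ℕ} : DMF m → ℕ
  | lit _ _ => 1
  | and l r => l.size + r.size
  | or l r => l.size + r.size

/-- Evaluation of a formula. -/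
def eval {m : ℕ} : DMF m → (Fin m → Bool) → Bool
  | lit i pos, x => if pos then x i else !(x i)
  | and l r, x => l.eval x && r.eval x
  | or l r, x => l.eval x || r.eval x

end DMF

/-- `L(f)`: the minimal size of a de Morgan formula computing `f`. -/
noncomputable def Lfun {m : ℕ} (f : BFunc m) : ℕ :=
  sInf {s | ∃ φ : DMF m, φ.size = s ∧ ∀ x, φ.eval x = f x}

/-- `L(A × B)`: the minimal size of a de Morgan formula separating `A` from `B`
(`0` if `A` or `B` is empty). -/
noncomputable def Lrect {m : ℕ} (A B : Set (Fin m → Bool)) : ℕ :=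
  open Classical in
  if A.Nonempty ∧ B.Nonempty then
    sInf {s | ∃ φ : DMF m, φ.size = s ∧
      (∀ a ∈ A, φ.eval a = true) ∧ (∀ b ∈ B, φ.eval b = false)}
  else 0

/-! ### Deterministic communication protocols -/

/-- A deterministic communication protocol tree: at each internal vertex the
indicated player sends a bit determined by her input. -/
inductive Prot (X Y O : Type) : Type where
  | leaf (o : O)
  | alice (s : X → Bool) (c : Bool → Prot X Y O)
  | bob (s : Y → Bool) (c : Bool → Prot X Y O)

namespace Prot

variable {X Y O : Type}

/-- Depth of a protocol tree. -/
def depth : Prot X Y O → ℕ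
  | leaf _ => 0
  | alice _ c => 1 + max (c false).depth (c true).depth
  | bob _ c => 1 + max (c false).depth (c true).depth

/-- Running a protocol on a pair of inputs. -/
def run : Prot X Y O → X → Y → O
  | leaf o, _, _ => o
  | alice s c, x, y => (c (s x)).run x y
  | bob s c, x, y => (c (s y)).run x y

/-- A protocol solves a relation if on every input pair it outputs a valid solution. -/
def Solves (p : Prot X Y O) (R : X → Y → O → Prop) : Prop :=
  ∀ x y, R x y (p.run x y)

/-- Alice's input `x` is consistent with the transcript `tr`. -/
def ConsA : Prot X Y O → List Bool → X → Prop
  | _, [], _ => True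
  | leaf _, _ :: _, _ => False
  | alice s c, b :: tr, x => s x = b ∧ ConsA (c b) tr x
  | bob _ c, b :: tr, x => ConsA (c b) tr x

/-- Bob's input `y` is consistent with the transcript `tr`. -/
def ConsB : Prot X Y O → List Bool → Y → Prop
  | _, [], _ => True
  | leaf _, _ :: _, _ => False
  | alice _ c, b :: tr, y => ConsB (c b) tr y
  | bob s c, b :: tr, y => s y = b ∧ ConsB (c b) tr y

/-- `tr` is a (possibly partial) transcript of `p`: each player has a consistent input. -/
def IsTranscript (p : Prot X Y O) (tr : List Bool) : Prop :=
  (∃ x, ConsA p tr x) ∧ (∃ y, ConsB p tr y)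

end Prot

/-- `C(R)`: the deterministic communication complexity of a relation. -/
noncomputable def CC {X Y O : Type} (R : X → Y → O → Prop) : ℕ :=
  sInf {d | ∃ p : Prot X Y O, p.Solves R ∧ p.depth = d}

/-! ### Karchmer–Wigderson compositions and multiplexor compositions -/

/-- The relation `KW_f ⋄ KW_g`. -/
def KWdiam {m n : ℕ} (f : BFunc m) (g : BFunc n) :
    {X : BMat m n // compFG f g X = true} → {Y : BMat m n // compFG f g Y = false} →
      Fin m × Fin n → Prop :=
  fun X Y o => X.1 o.1 o.2 ≠ Y.1 o.1 o.2

/-- The strong composition `KW_f ⊛ KW_g`. -/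
def KWstrong {m n : ℕ} (f : BFunc m) (g : BFunc n) :
    {X : BMat m n // compFG f g X = true} → {Y : BMat m n // compFG f g Y = false} →
      Fin m × Fin n → Prop :=
  fun X Y o => X.1 o.1 o.2 ≠ Y.1 o.1 o.2 ∧ g (X.1 o.1) ≠ g (Y.1 o.1)

/-- Alice's inputs in the multiplexor compositions: a function `g` and a matrix `X`
with `(f ⋄ g)(X) = 1`. -/
def AliceMux (m n : ℕ) (f : BFunc m) : Type :=
  {p : BFunc n × BMat m n // compFG f p.1 p.2 = true}

/-- Bob's inputs in the multiplexor compositions. -/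
def BobMux (m n : ℕ) (f : BFunc m) : Type :=
  {p : BFunc n × BMat m n // compFG f p.1 p.2 = false}

/-- The relation `KW_f ⋄ MUX_n` (output `none` plays the role of `⊥`). -/
def MuxDiam {m n : ℕ} (f : BFunc m) :
    AliceMux m n f → BobMux m n f → Option (Fin m × Fin n) → Prop :=
  fun x y o =>
    match o with
    | none => x.1.1 ≠ y.1.1
    | some (i, j) => x.1.2 i j ≠ y.1.2 i j

/-- The strong multiplexor composition `KW_f ⊛ MUX_n`. -/
def MuxStrong {m n : ℕ} (f : BFunc m) :
    AliceMux m n f → BobMux m n f → Option (Fin m × Fin n) → Prop :=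
  fun x y o =>
    match o with
    | none => x.1.1 ≠ y.1.1
    | some (i, j) => x.1.2 i j ≠ y.1.2 i j ∧ x.1.1 (x.1.2 i) ≠ y.1.1 (y.1.2 i)

/-- The function part of Alice's multiplexor input. -/
def muxGA {m n : ℕ} {f : BFunc m} (x : AliceMux m n f) : BFunc n := x.1.1

/-- The function part of Bob's multiplexor input. -/
def muxGB {m n : ℕ} {f : BFunc m} (y : BobMux m n f) : BFunc n := y.1.1

/-! ### Half-duplex protocols with adversary -/

/-- One player's tree in a half-duplex protocol: at each internal vertex, the
player's input determines whether she sends a bit (`some b`) or receives (`none`);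
the four children are indexed by (isSend, bit). -/
inductive HDTree (X O : Type) : Type where
  | leaf (o : O)
  | node (act : X → Option Bool) (child : Bool → Bool → HDTree X O)

namespace HDTree

variable {X O : Type}

/-- The tree is full of depth `d`: every leaf is at distance exactly `d` from the root. -/
inductive IsFull : HDTree X O → ℕ → Prop where
  | leaf (o : O) : IsFull (leaf o) 0
  | node {act : X → Option Bool} {child : Bool → Bool → HDTree X O} {d : ℕ}
      (h : ∀ s b, IsFull (child s b) d) : IsFull (node act child) (d + 1)

/-- The input `x` is consistent with the transcript `tr`: there is a vertex at
depth `|tr|` reachable on `x` along edges labeled `send(trᵢ)` or `receive(trᵢ)`. -/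
def Cons : HDTree X O → List Bool → X → Prop
  | _, [], _ => True
  | leaf _, _ :: _, _ => False
  | node act child, b :: tr, x =>
      match act x with
      | some c => c = b ∧ Cons (child true b) tr x
      | none => Cons (child false b) tr x

end HDTree

/-- One round of a half-duplex execution; `ab` are the bits delivered by the
adversary in case the round is silent. -/
def hdStep {X Y O : Type} (tA : HDTree X O) (tB : HDTree Y O) (x : X) (y : Y)
    (ab : Bool × Bool) : HDTree X O × HDTree Y O :=
  match tA, tB with
  | HDTree.node actA chA, HDTree.node actB chB =>
      ⟨match actA x with
        | some b => chA true b
        | none => chA false ((actB y).getD ab.1),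
       match actB y with
        | some b => chB true b
        | none => chB false ((actA x).getD ab.2)⟩
  | tA, tB => (tA, tB)

/-- Running a half-duplex execution for `d` rounds against the adversary `adv`. -/
def hdRun {X Y O : Type} :
    ℕ → (ℕ → Bool × Bool) → HDTree X O → HDTree Y O → X → Y → HDTree X O × HDTree Y O
  | 0, _, tA, tB, _, _ => (tA, tB)
  | d + 1, adv, tA, tB, x, y =>
      hdRun d (fun i => adv (i + 1)) (hdStep tA tB x y (adv 0)).1 (hdStep tA tB x y (adv 0)).2 x y

/-- The current round is classical: exactly one of the players sends. -/
def ClassicalRound {X Y O : Type} (tA : HDTree X O) (tB : HDTree Y O) (x : X) (y : Y) : Prop :=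
  match tA, tB with
  | HDTree.node actA _, HDTree.node actB _ => (actA x).isSome ≠ (actB y).isSome
  | _, _ => True

/-- All rounds of the `d`-round execution on `(x, y)` against `adv` are classical. -/
def AllClassical {X Y O : Type} :
    ℕ → (ℕ → Bool × Bool) → HDTree X O → HDTree Y O → X → Y → Prop
  | 0, _, _, _, _, _ => True
  | d + 1, adv, tA, tB, x, y =>
      ClassicalRound tA tB x y ∧
        AllClassical d (fun i => adv (i + 1)) (hdStep tA tB x y (adv 0)).1
          (hdStep tA tB x y (adv 0)).2 x y

/-- A half-duplex protocol of depth `d`: a pair of full 4-ary trees of depth `d`. -/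
structure HDProt (X Y O : Type) (d : ℕ) where
  alice : HDTree X O
  bob : HDTree Y O
  fullA : alice.IsFull d
  fullB : bob.IsFull d

namespace HDProt

variable {X Y O : Type} {d : ℕ}

/-- The protocol solves the relation `R`: in every execution against every adversary,
both players reach leaves labeled with a common output that is valid for the inputs. -/
def Solves (P : HDProt X Y O d) (R : X → Y → O → Prop) : Prop :=
  ∀ x y adv, ∃ o : O,
    (hdRun d adv P.alice P.bob x y).1 = HDTree.leaf o ∧
    (hdRun d adv P.alice P.bob x y).2 = HDTree.leaf o ∧ R x y o

/-- The protocol is partially half-duplex with respect to the function parts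
`gA`, `gB` of the inputs: when `gA x = gB y`, all rounds are classical. -/
def PartiallyHD {G : Type} (P : HDProt X Y O d) (gA : X → G) (gB : Y → G) : Prop :=
  ∀ x y adv, gA x = gB y → AllClassical d adv P.alice P.bob x y

/-- `tr` is a (possibly partial) transcript of `P`. -/
def IsTranscript (P : HDProt X Y O d) (tr : List Bool) : Prop :=
  (∃ x, P.alice.Cons tr x) ∧ (∃ y, P.bob.Cons tr y)

end HDProt

/-- Partially half-duplex communication complexity of a relation whose inputs carry
function parts `gA`, `gB`. -/
noncomputable def Cphd {X Y O G : Type} (R : X → Y → O → Prop)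
    (gA : X → G) (gB : Y → G) : ℕ :=
  sInf {d | ∃ P : HDProt X Y O d, P.Solves R ∧ P.PartiallyHD gA gB}

/-! ### Transcript sets for multiplexor protocols (half-duplex version) -/

section MuxSetsHD

variable {m n : ℕ} {f : BFunc m} {O : Type} {d : ℕ}

/-- `X_π(g)`: the matrices `X` such that Alice's input `(g, X)` is consistent with `tr`. -/
def XpiHD (P : HDProt (AliceMux m n f) (BobMux m n f) O d) (tr : List Bool)
    (g : BFunc n) : Set (BMat m n) :=
  {X | ∃ h : compFG f g X = true, P.alice.Cons tr ⟨(g, X), h⟩}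

/-- `Y_π(g)`: the matrices `Y` such that Bob's input `(g, Y)` is consistent with `tr`. -/
def YpiHD (P : HDProt (AliceMux m n f) (BobMux m n f) O d) (tr : List Bool)
    (g : BFunc n) : Set (BMat m n) :=
  {Y | ∃ h : compFG f g Y = false, P.bob.Cons tr ⟨(g, Y), h⟩}

/-- `A_π(g)`: the strings `a ∈ f⁻¹(1)` with `X_π(g, a) ≠ ∅`. -/
def ApiHD (P : HDProt (AliceMux m n f) (BobMux m n f) O d) (tr : List Bool)
    (g : BFunc n) : Set (Fin m → Bool) :=
  {a | f a = true ∧ (XpiHD P tr g ∩ ginv g a).Nonempty}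

/-- `B_π(g)`: the strings `b ∈ f⁻¹(0)` with `Y_π(g, b) ≠ ∅`. -/
def BpiHD (P : HDProt (AliceMux m n f) (BobMux m n f) O d) (tr : List Bool)
    (g : BFunc n) : Set (Fin m → Bool) :=
  {b | f b = false ∧ (YpiHD P tr g ∩ ginv g b).Nonempty}

/-- `V_π` (version via nonempty `X_π(g)` and `Y_π(g)`). -/
def VpiHD (P : HDProt (AliceMux m n f) (BobMux m n f) O d) (tr : List Bool) :
    Set (BFunc n) :=
  {g | (XpiHD P tr g).Nonempty ∧ (YpiHD P tr g).Nonempty}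

/-- `V_π` (version via nonempty `A_π(g)` and `B_π(g)`). -/
def VpiABHD (P : HDProt (AliceMux m n f) (BobMux m n f) O d) (tr : List Bool) :
    Set (BFunc n) :=
  {g | (ApiHD P tr g).Nonempty ∧ (BpiHD P tr g).Nonempty}

/-- A transcript `tr` of `P` is `γ`-alive (with the universal constant `κ = 8`). -/
def AliveHD (γ : ℝ) (P : HDProt (AliceMux m n f) (BobMux m n f) O d)
    (tr : List Bool) : Prop :=
  P.IsTranscript tr ∧
  ∃ V : Set (BFunc n), V ⊆ VpiABHD P tr ∧ (∀ g ∈ V, IsBalanced g) ∧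
    ((2 : ℝ) ^ (-(m : ℝ)) * ((BalancedFuncs n).ncard : ℝ) ≤ (V.ncard : ℝ)) ∧
    (∀ g ∈ V,
      (1 - γ) * m + 8 * Real.logb 2 m + 8 ≤
        Real.logb 2 (Lrect (ApiHD P tr g) (BpiHD P tr g))) ∧
    (∀ g ∈ V, ∀ a ∈ ApiHD P tr g,
      (2 : ℝ) ^ (-γ * m + 1) * ((ginv g a).ncard : ℝ) ≤
        ((XpiHD P tr g ∩ ginv g a).ncard : ℝ)) ∧
    (∀ g ∈ V, ∀ b ∈ BpiHD P tr g,
      (2 : ℝ) ^ (-γ * m + 1) * ((ginv g b).ncard : ℝ) ≤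
        ((YpiHD P tr g ∩ ginv g b).ncard : ℝ))

/-- The weak intersection property for two functions `gA`, `gB`. -/
def WeakIntersectHD (P : HDProt (AliceMux m n f) (BobMux m n f) O d) (tr : List Bool)
    (gA gB : BFunc n) : Prop :=
  ∃ X ∈ XpiHD P tr gA, ∃ Y ∈ YpiHD P tr gB,
    ∀ i : Fin m, gA (X i) ≠ gB (Y i) → X i = Y i

/-- The characteristic graph of `tr` for `KW_f ⋄ MUX_n`, on vertex set `V`. -/
def charGraphDiamHD (P : HDProt (AliceMux m n f) (BobMux m n f) O d) (tr : List Bool)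
    (V : Set (BFunc n)) : SimpleGraph ↥V where
  Adj gA gB := gA ≠ gB ∧
    ((XpiHD P tr ↑gA ∩ YpiHD P tr ↑gB).Nonempty ∨
      (XpiHD P tr ↑gB ∩ YpiHD P tr ↑gA).Nonempty)
  symm := by
    refine ⟨?_⟩
    rintro a b ⟨hne, h⟩
    exact ⟨hne.symm, h.symm⟩
  loopless := by
    refine ⟨?_⟩
    rintro a ⟨hne, -⟩
    exact hne rfl

/-- The characteristic graph of `tr` for `KW_f ⊛ MUX_n`, on vertex set `V`. -/
def charGraphStrongHD (P : HDProt (AliceMux m n f) (BobMux m n f) O d) (tr : List Bool)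
    (V : Set (BFunc n)) : SimpleGraph ↥V where
  Adj gA gB := gA ≠ gB ∧
    (WeakIntersectHD P tr ↑gA ↑gB ∨ WeakIntersectHD P tr ↑gB ↑gA)
  symm := by
    refine ⟨?_⟩
    rintro a b ⟨hne, h⟩
    exact ⟨hne.symm, h.symm⟩
  loopless := by
    refine ⟨?_⟩
    rintro a ⟨hne, -⟩
    exact hne rfl

end MuxSetsHD

/-! ### Transcript sets for multiplexor protocols (standard deterministic version) -/

section MuxSetsP

variable {m n : ℕ} {f : BFunc m} {O : Type}

/-- `X_π(g)` for a standard deterministic protocol. -/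
def XpiP (p : Prot (AliceMux m n f) (BobMux m n f) O) (tr : List Bool)
    (g : BFunc n) : Set (BMat m n) :=
  {X | ∃ h : compFG f g X = true, Prot.ConsA p tr ⟨(g, X), h⟩}

/-- `Y_π(g)` for a standard deterministic protocol. -/
def YpiP (p : Prot (AliceMux m n f) (BobMux m n f) O) (tr : List Bool)
    (g : BFunc n) : Set (BMat m n) :=
  {Y | ∃ h : compFG f g Y = false, Prot.ConsB p tr ⟨(g, Y), h⟩}

/-- `A_π(g)` for a standard deterministic protocol. -/
def ApiP (p : Prot (AliceMux m n f) (BobMux m n f) O) (tr : List Bool)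
    (g : BFunc n) : Set (Fin m → Bool) :=
  {a | f a = true ∧ (XpiP p tr g ∩ ginv g a).Nonempty}

/-- `B_π(g)` for a standard deterministic protocol. -/
def BpiP (p : Prot (AliceMux m n f) (BobMux m n f) O) (tr : List Bool)
    (g : BFunc n) : Set (Fin m → Bool) :=
  {b | f b = false ∧ (YpiP p tr g ∩ ginv g b).Nonempty}

/-- `V_π` (version via nonempty `X_π(g)` and `Y_π(g)`), standard protocols. -/
def VpiPset (p : Prot (AliceMux m n f) (BobMux m n f) O) (tr : List Bool) :
    Set (BFunc n) :=
  {g | (XpiP p tr g).Nonempty ∧ (YpiP p tr g).Nonempty}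

/-- `V_π` (version via nonempty `A_π(g)` and `B_π(g)`), standard protocols. -/
def VpiABP (p : Prot (AliceMux m n f) (BobMux m n f) O) (tr : List Bool) :
    Set (BFunc n) :=
  {g | (ApiP p tr g).Nonempty ∧ (BpiP p tr g).Nonempty}

/-- `γ`-alive transcripts (with `κ = 8`), standard protocols. -/
def AliveP (γ : ℝ) (p : Prot (AliceMux m n f) (BobMux m n f) O)
    (tr : List Bool) : Prop :=
  p.IsTranscript tr ∧
  ∃ V : Set (BFunc n), V ⊆ VpiABP p tr ∧ (∀ g ∈ V, IsBalanced g) ∧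
    ((2 : ℝ) ^ (-(m : ℝ)) * ((BalancedFuncs n).ncard : ℝ) ≤ (V.ncard : ℝ)) ∧
    (∀ g ∈ V,
      (1 - γ) * m + 8 * Real.logb 2 m + 8 ≤
        Real.logb 2 (Lrect (ApiP p tr g) (BpiP p tr g))) ∧
    (∀ g ∈ V, ∀ a ∈ ApiP p tr g,
      (2 : ℝ) ^ (-γ * m + 1) * ((ginv g a).ncard : ℝ) ≤
        ((XpiP p tr g ∩ ginv g a).ncard : ℝ)) ∧
    (∀ g ∈ V, ∀ b ∈ BpiP p tr g,
      (2 : ℝ) ^ (-γ * m + 1) * ((ginv g b).ncard : ℝ) ≤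
        ((YpiP p tr g ∩ ginv g b).ncard : ℝ))

/-- The weak intersection property, standard protocols. -/
def WeakIntersectP (p : Prot (AliceMux m n f) (BobMux m n f) O) (tr : List Bool)
    (gA gB : BFunc n) : Prop :=
  ∃ X ∈ XpiP p tr gA, ∃ Y ∈ YpiP p tr gB,
    ∀ i : Fin m, gA (X i) ≠ gB (Y i) → X i = Y i

/-- The characteristic graph for `KW_f ⋄ MUX_n`, standard protocols. -/
def charGraphDiamP (p : Prot (AliceMux m n f) (BobMux m n f) O) (tr : List Bool)
    (V : Set (BFunc n)) : SimpleGraph ↥V where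
  Adj gA gB := gA ≠ gB ∧
    ((XpiP p tr ↑gA ∩ YpiP p tr ↑gB).Nonempty ∨
      (XpiP p tr ↑gB ∩ YpiP p tr ↑gA).Nonempty)
  symm := by
    refine ⟨?_⟩
    rintro a b ⟨hne, h⟩
    exact ⟨hne.symm, h.symm⟩
  loopless := by
    refine ⟨?_⟩
    rintro a ⟨hne, -⟩
    exact hne rfl

/-- The characteristic graph for `KW_f ⊛ MUX_n`, standard protocols. -/
def charGraphStrongP (p : Prot (AliceMux m n f) (BobMux m n f) O) (tr : List Bool)
    (V : Set (BFunc n)) : SimpleGraph ↥V where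
  Adj gA gB := gA ≠ gB ∧
    (WeakIntersectP p tr ↑gA ↑gB ∨ WeakIntersectP p tr ↑gB ↑gA)
  symm := by
    refine ⟨?_⟩
    rintro a b ⟨hne, h⟩
    exact ⟨hne.symm, h.symm⟩
  loopless := by
    refine ⟨?_⟩
    rintro a ⟨hne, -⟩
    exact hne rfl

end MuxSetsP

/-! ### Prefix-thick sets, branching structures and winning sets -/

/-- A set of strings indexed by a linearly ordered set `I` is prefix thick with
degree `t`: it has a nonempty subset whose prefix tree has minimum degree
greater than `t` (the children of the depth-`i` vertex given by the prefix of
`x ∈ S'` are the possible values of the next coordinate among elements of `S'`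
agreeing with `x` on all earlier coordinates). -/
def RowThick {I A : Type} [LT I] (S : Set (I → A)) (t : ℝ) : Prop :=
  ∃ S' : Set (I → A), S' ⊆ S ∧ S'.Nonempty ∧ ∀ x ∈ S', ∀ i : I,
    t < (({a : A | ∃ y ∈ S', (∀ j, j < i → y j = x j) ∧ y i = a}).ncard : ℝ)

/-- Prefix thickness for strings over (possibly different) alphabets `A i`,
with a separate degree bound `t i` at each depth. -/
def DepThick {m : ℕ} {A : Fin m → Type} (S : Set (∀ i, A i)) (t : Fin m → ℝ) : Prop :=
  ∃ S' : Set (∀ i, A i), S' ⊆ S ∧ S'.Nonempty ∧ ∀ x ∈ S', ∀ i : Fin m,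
    t i < (({a : A i | ∃ y ∈ S', (∀ j, j < i → y j = x j) ∧ y i = a}).ncard : ℝ)

/-- The restriction of a set of matrices to the rows in `I` (ordered as in `[m]`). -/
def restrictRows {m n : ℕ} (I : Finset (Fin m)) (S : Set (BMat m n)) :
    Set (↥I → (Fin n → Bool)) :=
  (fun X => fun i : ↥I => X i.1) '' S

/-- The restriction of a set of strings to the coordinates in `I` (ordered as in `[m]`). -/
def restrictStr {m : ℕ} {A : Type} (I : Finset (Fin m)) (S : Set (Fin m → A)) :
    Set (↥I → A) :=
  (fun x => fun i : ↥I => x i.1) '' S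

/-- `w` is a branching structure of `S`: some nonempty subset `S' ⊆ S` has a prefix
tree in which every vertex at depth `i` has exactly `w i` children. -/
def IsBranching {m : ℕ} {A : Type} (S : Set (Fin m → A)) (w : Fin m → ℕ) : Prop :=
  ∃ S' : Set (Fin m → A), S' ⊆ S ∧ S'.Nonempty ∧ ∀ x ∈ S', ∀ i : Fin m,
    ({a : A | ∃ y ∈ S', (∀ j, j < i → y j = x j) ∧ y i = a}).ncard = w i

/-- The winning set of `S`: the set of its branching structures. -/
def WinSet {m : ℕ} {A : Type} (S : Set (Fin m → A)) : Set (Fin m → ℕ) :=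
  {w | IsBranching S w}

/-! ### Non-deterministic communication complexity -/

/-- There is a non-deterministic protocol for the total function `f` with
witness set of size `k`. -/
def NDProtFor {X Y : Type} (f : X × Y → Bool) (k : ℕ) : Prop :=
  ∃ a : X → Fin k → Bool, ∃ b : Y → Fin k → Bool,
    ∀ x y, f (x, y) = true ↔ ∃ w, a x w = true ∧ b y w = true

/-- The minimal size of a (nonempty) witness set of a non-deterministic protocol for `f`;
the non-deterministic communication complexity `NCC(f)` is its base-2 logarithm. -/
noncomputable def NCCcard {X Y : Type} (f : X × Y → Bool) : ℕ :=
  sInf {k | 1 ≤ k ∧ NDProtFor f k}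

/-- A non-deterministic protocol for the partial problem `GraphIneq_G` with witness
set of size `k`: adjacent pairs are accepted, equal pairs are rejected. -/
def GraphIneqProt {V : Type} (G : SimpleGraph V) (k : ℕ) : Prop :=
  ∃ a : V → Fin k → Bool, ∃ b : V → Fin k → Bool,
    (∀ u v, G.Adj u v → ∃ w, a u w = true ∧ b v w = true) ∧
    (∀ v, ¬ ∃ w, a v w = true ∧ b v w = true)

/-- The minimal witness-set size of a non-deterministic protocol for `GraphIneq_G`;
`NCC(GraphIneq_G)` is its base-2 logarithm. -/
noncomputable def NCCgraphIneqCard {V : Type} (G : SimpleGraph V) : ℕ :=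
  sInf {k | 1 ≤ k ∧ GraphIneqProt G k}

/-- `S` is an independent set of `G`. -/
def IndepIn {V : Type} (G : SimpleGraph V) (S : Set V) : Prop :=
  ∀ u ∈ S, ∀ v ∈ S, ¬ G.Adj u v

section Helpers

lemma filter_snd_card {δ γ : Type*} [DecidableEq γ] {U : Set (δ × γ)} (hU : U.Finite) (c : γ) :
    ((hU.toFinset.filter (fun p => p.2 = c)).card) = ({a | (a, c) ∈ U}).ncard := by
  have himg : (fun a => (a, c)) '' {a | (a, c) ∈ U} =
      ↑(hU.toFinset.filter (fun p => p.2 = c)) := by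
    ext p
    simp only [Set.mem_image, Finset.coe_filter, Set.mem_setOf_eq,
      Set.Finite.mem_toFinset]
    constructor
    · rintro ⟨a, ha, rfl⟩; exact ⟨ha, rfl⟩
    · rintro ⟨hp, h2⟩; exact ⟨p.1, by rwa [show (p.1, c) = p from Prod.ext rfl h2.symm], Prod.ext rfl h2.symm⟩
  have hinj : Function.Injective (fun a : δ => (a, c)) := fun a b hab => congrArg Prod.fst hab
  rw [← Set.ncard_image_of_injective _ hinj, himg, Set.ncard_coe_finset]

/-- Double counting: two finite sets of pairs with equal fibers over the second
coordinate have equal cardinality. -/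
lemma ncard_eq_of_fiber_ncard_eq {α β γ : Type*} {S : Set (α × γ)} {T : Set (β × γ)}
    (hS : S.Finite) (hT : T.Finite)
    (h : ∀ c : γ, ({a | (a, c) ∈ S}).ncard = ({b | (b, c) ∈ T}).ncard) :
    S.ncard = T.ncard := by
  classical
  set FS := hS.toFinset with hFS
  set FT := hT.toFinset with hFT
  set W : Finset γ := FS.image Prod.snd ∪ FT.image Prod.snd with hW
  have h1 : FS.card = ∑ c ∈ W, (FS.filter (fun p => p.2 = c)).card :=
    Finset.card_eq_sum_card_fiberwise fun x hx =>
      Finset.mem_union_left _ (Finset.mem_image_of_mem _ hx)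
  have h2 : FT.card = ∑ c ∈ W, (FT.filter (fun p => p.2 = c)).card :=
    Finset.card_eq_sum_card_fiberwise fun x hx =>
      Finset.mem_union_right _ (Finset.mem_image_of_mem _ hx)
  have : ∀ c ∈ W, (FS.filter (fun p => p.2 = c)).card = (FT.filter (fun p => p.2 = c)).card := by
    intro c _
    rw [hFS, hFT, filter_snd_card hS c, filter_snd_card hT c, h c]
  rw [Set.ncard_eq_toFinset_card _ hS, Set.ncard_eq_toFinset_card _ hT, ← hFS, ← hFT,
    h1, h2]
  exact Finset.sum_congr rfl this

variable {m : ℕ} {A : Type}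

lemma zero_fiber_eq (S' : Set (Fin (m + 1) → A)) (x : Fin (m + 1) → A) :
    {a : A | ∃ y ∈ S', (∀ j, j < (0 : Fin (m + 1)) → y j = x j) ∧ y 0 = a}
      = {a : A | ∃ y ∈ S', y 0 = a} := by
  ext a
  simp only [Set.mem_setOf_eq]
  constructor
  · rintro ⟨y, hy, -, h0⟩; exact ⟨y, hy, h0⟩
  · rintro ⟨y, hy, h0⟩; exact ⟨y, hy, fun j hj => absurd hj (Fin.not_lt_zero j), h0⟩

lemma succ_fiber_eq (S' : Set (Fin (m + 1) → A)) (a : A) (x' : Fin m → A) (i' : Fin m) :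
    {b : A | ∃ y ∈ S', (∀ j, j < Fin.succ i' → y j = (Fin.cons a x' : Fin (m+1) → A) j) ∧ y (Fin.succ i') = b}
      = {b : A | ∃ z ∈ {y' : Fin m → A | Fin.cons a y' ∈ S'},
          (∀ j, j < i' → z j = x' j) ∧ z i' = b} := by
  ext b
  simp only [Set.mem_setOf_eq]
  constructor
  · rintro ⟨y, hy, hagree, hval⟩
    have h0 : y 0 = a := by
      have := hagree 0 (Fin.succ_pos i')
      simpa using this
    refine ⟨Fin.tail y, ?_, ?_, hval⟩
    · show Fin.cons a (Fin.tail y) ∈ S'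
      rwa [← h0, Fin.cons_self_tail]
    · intro j hj
      have := hagree j.succ (by rwa [Fin.succ_lt_succ_iff])
      simpa [Fin.tail] using this
  · rintro ⟨z, hz, hagree, hval⟩
    refine ⟨Fin.cons a z, hz, ?_, by simp [hval]⟩
    intro j hj
    induction j using Fin.cases with
    | zero => simp
    | succ j' =>
      have hj' : j' < i' := by rwa [Fin.succ_lt_succ_iff] at hj
      simpa using hagree j' hj'

variable [Fintype A]

lemma winset_finite (X : Set (Fin m → A)) : (WinSet X).Finite := by
  classical
  have hsub : WinSet X ⊆ Set.pi Set.univ (fun _ : Fin m => Set.Iic (Fintype.card A)) := by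
    rintro w ⟨S', hsub, ⟨x, hx⟩, hbr⟩ i -
    rw [← hbr x hx i]
    calc ({a : A | ∃ y ∈ S', (∀ j, j < i → y j = x j) ∧ y i = a}).ncard
        ≤ (Set.univ : Set A).ncard :=
          Set.ncard_le_ncard (Set.subset_univ _) Set.finite_univ
      _ = Fintype.card A := by rw [Set.ncard_univ, Nat.card_eq_fintype_card]
  exact (Set.Finite.pi fun _ => Set.finite_Iic _).subset hsub

/-- Key decomposition of branching structures of length `m+1`. -/
lemma mem_winset_cons (X : Set (Fin (m + 1) → A)) (k : ℕ) (w' : Fin m → ℕ) :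
    Fin.cons k w' ∈ WinSet X ↔
      1 ≤ k ∧ k ≤ ({a : A | w' ∈ WinSet {y | Fin.cons a y ∈ X}}).ncard := by
  classical
  constructor
  · rintro ⟨S', hsub, ⟨x₀, hx₀⟩, hbr⟩
    set T : Set A := {a | ∃ y ∈ S', y 0 = a} with hT
    have hTcard : T.ncard = k := by
      have := hbr x₀ hx₀ 0
      rwa [zero_fiber_eq, Fin.cons_zero, ← hT] at this
    have hTsub : T ⊆ {a : A | w' ∈ WinSet {y | Fin.cons a y ∈ X}} := by
      rintro a ⟨y₀, hy₀, h0⟩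
      refine ⟨{y' | Fin.cons a y' ∈ S'}, ?_, ?_, ?_⟩
      · intro y' hy'; exact hsub hy'
      · refine ⟨Fin.tail y₀, ?_⟩
        show Fin.cons a (Fin.tail y₀) ∈ S'
        rwa [← h0, Fin.cons_self_tail]
      · intro x' hx' i'
        have := hbr (Fin.cons a x') hx' i'.succ
        rwa [succ_fiber_eq, Fin.cons_succ] at this
    constructor
    · rw [← hTcard]
      rw [Nat.one_le_iff_ne_zero]
      intro h0
      have : T.Nonempty := ⟨x₀ 0, ⟨x₀, hx₀, rfl⟩⟩
      rw [← Set.ncard_pos (Set.toFinite T)] at this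
      omega
    · rw [← hTcard]
      exact Set.ncard_le_ncard hTsub (Set.toFinite _)
  · rintro ⟨hk1, hkle⟩
    obtain ⟨T, hTsub, hTcard⟩ := Set.exists_subset_card_eq hkle
    have hch : ∀ a : A, ∃ Sa : Set (Fin m → A), a ∈ T →
        Sa ⊆ {y | Fin.cons a y ∈ X} ∧ Sa.Nonempty ∧ ∀ x ∈ Sa, ∀ i : Fin m,
          ({b : A | ∃ y ∈ Sa, (∀ j, j < i → y j = x j) ∧ y i = b}).ncard = w' i := by
      intro a
      by_cases ha : a ∈ T
      · obtain ⟨Sa, h1, h2, h3⟩ := hTsub ha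
        exact ⟨Sa, fun _ => ⟨h1, h2, h3⟩⟩
      · exact ⟨∅, fun h => absurd h ha⟩
    choose F hF using hch
    set S' : Set (Fin (m + 1) → A) := {x | x 0 ∈ T ∧ Fin.tail x ∈ F (x 0)} with hS'
    have hmemS' : ∀ a ∈ T, ∀ z ∈ F a, Fin.cons a z ∈ S' := by
      intro a ha z hz
      refine ⟨by simpa using ha, by simpa using hz⟩
    have hfiberS' : ∀ a : A, {y' : Fin m → A | Fin.cons a y' ∈ S'} = if a ∈ T then F a else ∅ := by
      intro a
      ext y'
      by_cases ha : a ∈ T <;> simp [hS', Fin.tail_cons, ha]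
    have hTne : T.Nonempty := by
      rw [← Set.ncard_pos (Set.toFinite T), hTcard]; omega
    refine ⟨S', ?_, ?_, ?_⟩
    · rintro x ⟨hx0, hxt⟩
      have := (hF (x 0) hx0).1 hxt
      simpa [Fin.cons_self_tail] using this
    · obtain ⟨a, ha⟩ := hTne
      obtain ⟨z, hz⟩ := (hF a ha).2.1
      exact ⟨Fin.cons a z, hmemS' a ha z hz⟩
    · intro x hx i
      induction i using Fin.cases with
      | zero =>
        rw [zero_fiber_eq, Fin.cons_zero, ← hTcard]
        congr 1
        ext a
        simp only [Set.mem_setOf_eq]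
        constructor
        · rintro ⟨y, ⟨hy0, _⟩, rfl⟩; exact hy0
        · intro ha
          obtain ⟨z, hz⟩ := (hF a ha).2.1
          exact ⟨Fin.cons a z, hmemS' a ha z hz, by simp⟩
      | succ i' =>
        obtain ⟨hx0, hxt⟩ := hx
        have hrw : x = Fin.cons (x 0) (Fin.tail x) := (Fin.cons_self_tail x).symm
        rw [hrw, succ_fiber_eq, hfiberS' (x 0), if_pos hx0, Fin.cons_succ]
        exact (hF (x 0) hx0).2.2 (Fin.tail x) hxt i'

end Helpers

theorem statement11 {m : ℕ} {A : Type} [Fintype A] (X : Set (Fin m → A)) :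
    (WinSet X).ncard = X.ncard := by
  classical
  induction m with
  | zero =>
    rcases X.eq_empty_or_nonempty with rfl | ⟨x, hx⟩
    · have : WinSet (∅ : Set (Fin 0 → A)) = ∅ := by
        ext w
        simp only [WinSet, IsBranching, Set.mem_setOf_eq, Set.mem_empty_iff_false, iff_false]
        rintro ⟨S', hsub, ⟨y, hy⟩, -⟩
        exact hsub hy
      simp [this]
    · have hX : X = {x} := Set.eq_singleton_iff_nonempty_unique_mem.mpr
        ⟨⟨x, hx⟩, fun y _ => Subsingleton.elim y x⟩
      have hW : WinSet X = {(Fin.elim0 : Fin 0 → ℕ)} := by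
        apply Set.eq_singleton_iff_nonempty_unique_mem.mpr
        constructor
        · exact ⟨Fin.elim0, X, le_refl _, ⟨x, hx⟩, fun z _ i => i.elim0⟩
        · intro w _; exact funext fun i => i.elim0
      rw [hW, hX, Set.ncard_singleton, Set.ncard_singleton]
  | succ m ih =>
    set N : (Fin m → ℕ) → ℕ :=
      fun w' => ({a : A | w' ∈ WinSet {y | Fin.cons a y ∈ X}}).ncard with hN
    set P : Set (ℕ × (Fin m → ℕ)) := {p | 1 ≤ p.1 ∧ p.1 ≤ N p.2} with hP
    set T : Set (A × (Fin m → ℕ)) := {q | q.2 ∈ WinSet {y | Fin.cons q.1 y ∈ X}} with hT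
    set Q : Set (A × (Fin m → A)) := {q | Fin.cons q.1 q.2 ∈ X} with hQ
    -- finiteness
    have hUfin : (⋃ a : A, WinSet {y | Fin.cons a y ∈ X}).Finite :=
      Set.finite_iUnion fun a => winset_finite _
    have hPfin : P.Finite := by
      apply (Set.Finite.prod (Set.finite_Icc 1 (Fintype.card A)) hUfin).subset
      rintro ⟨p1, p2⟩ ⟨h1, h2⟩
      have hNle : N p2 ≤ Fintype.card A := by
        rw [hN]
        calc ({a : A | p2 ∈ WinSet {y | Fin.cons a y ∈ X}}).ncard
            ≤ (Set.univ : Set A).ncard := Set.ncard_le_ncard (Set.subset_univ _) Set.finite_univ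
          _ = Fintype.card A := by rw [Set.ncard_univ, Nat.card_eq_fintype_card]
      have hNpos : 0 < N p2 := lt_of_lt_of_le h1 h2
      rw [Set.ncard_pos (Set.toFinite _)] at hNpos
      obtain ⟨a, ha⟩ := hNpos
      exact ⟨Set.mem_Icc.mpr ⟨h1, le_trans h2 hNle⟩, Set.mem_iUnion.mpr ⟨a, ha⟩⟩
    have hTfin : T.Finite := by
      apply (Set.Finite.prod Set.finite_univ hUfin).subset
      rintro ⟨a, w'⟩ hq
      exact ⟨Set.mem_univ a, Set.mem_iUnion.mpr ⟨a, hq⟩⟩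
    have hQfin : Q.Finite := Set.toFinite Q
    -- WinSet X = image of P
    have hWP : WinSet X = (fun p : ℕ × (Fin m → ℕ) => (Fin.cons p.1 p.2 : Fin (m+1) → ℕ)) '' P := by
      ext w
      constructor
      · intro hw
        refine ⟨(w 0, Fin.tail w), ?_, Fin.cons_self_tail w⟩
        have := (mem_winset_cons X (w 0) (Fin.tail w)).mp (by rwa [Fin.cons_self_tail])
        exact this
      · rintro ⟨⟨k, w'⟩, hp, rfl⟩
        exact (mem_winset_cons X k w').mpr hp
    have hconsinj : Function.Injective (fun p : ℕ × (Fin m → ℕ) => (Fin.cons p.1 p.2 : Fin (m+1) → ℕ)) := by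
      rintro ⟨k1, w1⟩ ⟨k2, w2⟩ h
      have h0 : k1 = k2 := by
        have := congrFun h 0; simpa using this
      have ht : w1 = w2 := by
        funext i
        have := congrFun h i.succ; simpa using this
      simp [h0, ht]
    -- X = image of Q
    have hXQ : X = (fun q : A × (Fin m → A) => (Fin.cons q.1 q.2 : Fin (m+1) → A)) '' Q := by
      ext x
      constructor
      · intro hx
        exact ⟨(x 0, Fin.tail x), by simpa [hQ, Fin.cons_self_tail] using hx, Fin.cons_self_tail x⟩
      · rintro ⟨⟨a, y⟩, hq, rfl⟩
        exact hq
    have hconsinj' : Function.Injective (fun q : A × (Fin m → A) => (Fin.cons q.1 q.2 : Fin (m+1) → A)) := by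
      rintro ⟨a1, y1⟩ ⟨a2, y2⟩ h
      have h0 : a1 = a2 := by
        have := congrFun h 0; simpa using this
      have ht : y1 = y2 := by
        funext i
        have := congrFun h i.succ; simpa using this
      simp [h0, ht]
    -- fibers of P and T over w' are equal
    have hPT : P.ncard = T.ncard := by
      apply ncard_eq_of_fiber_ncard_eq hPfin hTfin
      intro w'
      have : {k : ℕ | (k, w') ∈ P} = Set.Icc 1 (N w') := by
        ext k; simp [hP, Set.mem_Icc]
      rw [this, ← Finset.coe_Icc, Set.ncard_coe_finset, Nat.card_Icc]
      simp [hT, hN]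
    -- fibers of T and Q over a: swap pairs; instead compare via first coordinate
    have hTQ : T.ncard = Q.ncard := by
      have e1 : T.ncard = ((fun q : A × (Fin m → ℕ) => (q.2, q.1)) '' T).ncard :=
        (Set.ncard_image_of_injective _ (fun q r h => by
          simpa [Prod.ext_iff, and_comm] using h)).symm
      have e2 : Q.ncard = ((fun q : A × (Fin m → A) => (q.2, q.1)) '' Q).ncard :=
        (Set.ncard_image_of_injective _ (fun q r h => by
          simpa [Prod.ext_iff, and_comm] using h)).symm
      rw [e1, e2]
      apply ncard_eq_of_fiber_ncard_eq (hTfin.image _) (hQfin.image _)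
      intro a
      have hA : {w' | (w', a) ∈ (fun q : A × (Fin m → ℕ) => (q.2, q.1)) '' T}
          = WinSet {y | Fin.cons a y ∈ X} := by
        ext w'
        simp [hT, Prod.ext_iff, WinSet]
      have hB : {y | (y, a) ∈ (fun q : A × (Fin m → A) => (q.2, q.1)) '' Q}
          = {y | Fin.cons a y ∈ X} := by
        ext y
        simp [hQ, Prod.ext_iff]
      rw [hA, hB]
      exact ih _
    rw [hWP, Set.ncard_image_of_injective _ hconsinj, hPT, hTQ, hXQ,
      Set.ncard_image_of_injective _ hconsinj']
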